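/- arXiv:1208.4383 — 2 statements merged into one kernel-verified Lean document; each statement's English description precedes it below -/
import Mathlib

section
/- Let T be an annihilator extension of an infinite residually nilpotent finitely generated semigroup S, with annihilator element t and quotient map ν: T → S with kernel ⟨t⟩, and let c be defined by t ∈ T^c \ T^{c+1}. Then T/T^i ≅ S/S^i for 1 ≤ i ≤ c, and |T/T^i| = |S/S^i| + 1 for i ≥ c+1. -/
/-- `sgPow S i` is the set `Sⁱ` of all products of `i` elements of `S`
(with the convention `S⁰ = S¹ = S`). -/
def sgPow (S : Type*) [Mul S] : ℕ → Set S
  | 0 => Set.univ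
  | 1 => Set.univ
  | n + 2 => Set.image2 (· * ·) (sgPow S (n + 1)) Set.univ

/-- A semigroup with zero is nilpotent of class `c` if `S^(c+1) = {0}` and `S^c ≠ {0}`. -/
def IsNilpotentOfClass (S : Type*) [SemigroupWithZero S] (c : ℕ) : Prop :=
  sgPow S (c + 1) = {0} ∧ sgPow S c ≠ {0}

/-- `mpow x i` is the power `xⁱ` in a magma, for `i ≥ 1` (with `mpow x 0 = x` by convention). -/
def mpow {S : Type*} [Mul S] (x : S) : ℕ → S
  | 0 => x
  | 1 => x
  | n + 2 => mpow x (n + 1) * x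
theorem sgPow_succ_subset (S : Type*) [Mul S] : ∀ i, sgPow S (i + 1) ⊆ sgPow S i
  | 0 => by simp [sgPow]
  | 1 => by intro x _; simp [sgPow]
  | n + 2 => by
      intro x hx
      rcases hx with ⟨a, ha, b, hb, rfl⟩
      exact ⟨a, sgPow_succ_subset S (n + 1) ha, b, hb, rfl⟩

theorem mul_mem_sgPow_right {S : Type*} [Mul S] :
    ∀ i, ∀ a ∈ sgPow S i, ∀ b : S, a * b ∈ sgPow S i
  | 0 => by intro a _ b; trivial
  | 1 => by intro a _ b; trivial
  | n + 2 => fun a ha b =>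
      sgPow_succ_subset S (n + 2) ⟨a, ha, b, trivial, rfl⟩

theorem mul_mem_sgPow_left {S : Type*} [Semigroup S] :
    ∀ i, ∀ a ∈ sgPow S i, ∀ b : S, b * a ∈ sgPow S i
  | 0 => by intro a _ b; trivial
  | 1 => by intro a _ b; trivial
  | n + 2 => by
      rintro _ ⟨c, hc, d, -, rfl⟩ b
      exact ⟨b * c, mul_mem_sgPow_left (n + 1) c hc b, d, trivial, mul_assoc b c d⟩

theorem zero_mem_sgPow {S : Type*} [MulZeroClass S] : ∀ i, (0 : S) ∈ sgPow S i
  | 0 => trivial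
  | 1 => trivial
  | n + 2 => ⟨0, zero_mem_sgPow (n + 1), 0, trivial, (mul_zero 0)⟩

/-- The Rees congruence identifying all elements of the ideal `Sⁱ`. -/
def reesSetoid (S : Type*) (I : Set S) : Setoid S where
  r x y := x = y ∨ (x ∈ I ∧ y ∈ I)
  iseqv := ⟨fun _ => Or.inl rfl, fun h => by tauto, fun h₁ h₂ => by
    rcases h₁ with rfl | h₁
    · exact h₂
    · rcases h₂ with rfl | h₂ <;> exact Or.inr ⟨h₁.1, by tauto⟩⟩

/-- The Rees quotient `S/Sⁱ` of a semigroup by the ideal `Sⁱ`. -/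
def ReesQuot (S : Type*) [Mul S] (i : ℕ) := Quotient (reesSetoid S (sgPow S i))

instance {S : Type*} [Semigroup S] {i : ℕ} : Semigroup (ReesQuot S i) where
  mul := Quotient.map₂ (· * ·) (by
    intro a₁ a₂ h₁ b₁ b₂ h₂
    rcases h₁ with rfl | ⟨ha₁, ha₂⟩
    · rcases h₂ with rfl | ⟨hb₁, hb₂⟩
      · exact Or.inl rfl
      · exact Or.inr ⟨mul_mem_sgPow_left i b₁ hb₁ a₁, mul_mem_sgPow_left i b₂ hb₂ a₁⟩
    · exact Or.inr ⟨mul_mem_sgPow_right i a₁ ha₁ b₁, mul_mem_sgPow_right i a₂ ha₂ b₂⟩)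
  mul_assoc a b c := by
    induction a using Quotient.inductionOn
    induction b using Quotient.inductionOn
    induction c using Quotient.inductionOn
    exact congrArg Quotient.mk'' (mul_assoc _ _ _)

instance {S : Type*} [SemigroupWithZero S] {i : ℕ} : SemigroupWithZero (ReesQuot S i) where
  zero := Quotient.mk _ 0
  zero_mul a := by
    induction a using Quotient.inductionOn
    exact congrArg (Quotient.mk _) (zero_mul _)
  mul_zero a := by
    induction a using Quotient.inductionOn
    exact congrArg (Quotient.mk _) (mul_zero _)
/-- A semigroup is finitely generated if it is generated by a finite set. -/
def FGSemigroup (S : Type*) [Mul S] : Prop :=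
  ∃ F : Finset S, Subsemigroup.closure (F : Set S) = ⊤

/-- A semigroup with zero is residually nilpotent if the intersection of its
power ideals is `{0}`. -/
def ResiduallyNilpotent (S : Type*) [SemigroupWithZero S] : Prop :=
  ⋂ i, sgPow S (i + 1) = {0}

/-- The coclass of the nilpotent quotient `S/Sⁱ`: its number of non-zero elements,
`|S \ Sⁱ|`, minus its class `i - 1`. -/
noncomputable def ccQuot (S : Type*) [SemigroupWithZero S] (i : ℕ) : ℕ :=
  (Set.univ \ sgPow S i).ncard - (i - 1)

/-- A finitely generated residually nilpotent semigroup has coclass `r` if the coclasses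
of its nilpotent quotients `S/Sⁱ` converge to `r`. -/
def HasCoclassSg (S : Type*) [SemigroupWithZero S] (r : ℕ) : Prop :=
  ∀ᶠ i in Filter.atTop, ccQuot S i = r
theorem sgPow_antitone' (S : Type*) [Mul S] {i j : ℕ} (h : i ≤ j) :
    sgPow S j ⊆ sgPow S i := by
  induction j, h using Nat.le_induction with
  | base => exact fun x hx => hx
  | succ j _ ih => exact fun x hx => ih (sgPow_succ_subset S j hx)

/-- `prodsOf F n` is the set of products of `n + 1` elements of `F`. -/
def prodsOf {S : Type*} [Mul S] (F : Set S) : ℕ → Set S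
  | 0 => F
  | n + 1 => Set.image2 (· * ·) (prodsOf F n) F

theorem prodsOf_mul {S : Type*} [Semigroup S] (F : Set S) :
    ∀ n m, ∀ a ∈ prodsOf F m, ∀ b ∈ prodsOf F n, a * b ∈ prodsOf F (m + n + 1)
  | 0 => fun m a ha b hb => ⟨a, ha, b, hb, rfl⟩
  | n + 1 => by
      rintro m a ha _ ⟨b, hb, f, hf, rfl⟩
      rw [← mul_assoc]
      exact ⟨a * b, prodsOf_mul F n m a ha b hb, f, hf, rfl⟩

theorem exists_prodsOf {S : Type*} [Semigroup S] {F : Finset S}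
    (hF : Subsemigroup.closure (F : Set S) = ⊤) (x : S) :
    ∃ n, x ∈ prodsOf (F : Set S) n := by
  have hx : x ∈ Subsemigroup.closure (F : Set S) := hF ▸ Subsemigroup.mem_top x
  induction hx using Subsemigroup.closure_induction with
  | mem y hy => exact ⟨0, hy⟩
  | mul a b _ _ iha ihb =>
      obtain ⟨m, hm⟩ := iha
      obtain ⟨n, hn⟩ := ihb
      exact ⟨m + n + 1, prodsOf_mul _ n m a hm b hn⟩

theorem prodsOf_finite {S : Type*} [Mul S] (F : Finset S) :
    ∀ n, (prodsOf (F : Set S) n).Finite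
  | 0 => F.finite_toSet
  | n + 1 => Set.Finite.image2 _ (prodsOf_finite F n) F.finite_toSet

theorem prodsOf_subset_sgPow {S : Type*} [Mul S] (F : Set S) :
    ∀ n, prodsOf F n ⊆ sgPow S (n + 1)
  | 0 => fun _ _ => trivial
  | n + 1 => by
      rintro _ ⟨a, ha, b, _, rfl⟩
      exact ⟨a, prodsOf_subset_sgPow F n ha, b, trivial, rfl⟩

theorem compl_sgPow_finite {S : Type*} [Semigroup S] (hfg : FGSemigroup S) (i : ℕ) :
    ((sgPow S i)ᶜ : Set S).Finite := by
  obtain ⟨F, hF⟩ := hfg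
  apply Set.Finite.subset (Set.Finite.biUnion (Set.finite_Iio i) (fun n _ => prodsOf_finite F n))
  intro x hx
  obtain ⟨n, hn⟩ := exists_prodsOf hF x
  refine Set.mem_biUnion (show n ∈ Set.Iio i from ?_) hn
  by_contra h
  exact hx (sgPow_antitone' S (by simp [Set.Iio] at h; omega : i ≤ n + 1)
    (prodsOf_subset_sgPow _ n hn))

theorem card_reesQuot {S : Type*} [SemigroupWithZero S] (i : ℕ)
    (hfin : Finite ((sgPow S i)ᶜ : Set S)) :
    Nat.card (ReesQuot S i) = Nat.card ((sgPow S i)ᶜ : Set S) + 1 := by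
  classical
  have hbij : Function.Bijective (fun o : Option ((sgPow S i)ᶜ : Set S) =>
      (Quotient.mk (reesSetoid S (sgPow S i)) (o.elim 0 Subtype.val) : ReesQuot S i)) := by
    constructor
    · rintro (_ | ⟨x, hx⟩) (_ | ⟨y, hy⟩) h
      · rfl
      · rcases Quotient.exact h with h | h
        · have h' : (0 : S) = y := h
          exact absurd (h' ▸ zero_mem_sgPow i) hy
        · exact absurd h.2 hy
      · rcases Quotient.exact h with h | h
        · have h' : x = (0 : S) := h
          exact absurd (h'.symm ▸ zero_mem_sgPow i) hx
        · exact absurd h.1 hx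
      · rcases Quotient.exact h with h | h
        · have h' : x = y := h
          exact congrArg some (Subtype.ext h')
        · exact absurd h.1 hx
    · intro q
      induction q using Quotient.inductionOn with
      | h x =>
        by_cases hx : x ∈ sgPow S i
        · exact ⟨none, Quotient.sound (Or.inr ⟨zero_mem_sgPow i, hx⟩)⟩
        · exact ⟨some ⟨x, hx⟩, rfl⟩
  rw [show Nat.card (ReesQuot S i) = Nat.card (Option ((sgPow S i)ᶜ : Set S)) from
    (Nat.card_eq_of_bijective _ hbij).symm, Finite.card_option]

/-- Let `T` be an annihilator extension of an infinite residually nilpotent finitely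
generated semigroup `S`, with annihilating element `t` and Rees quotient map `ν : T → S`
with kernel `{t, 0}`, and let `c` be defined by `t ∈ T^c \ T^(c+1)`. Then the Rees
quotients satisfy `T/Tⁱ ≅ S/Sⁱ` for `1 ≤ i ≤ c`, and `|T/Tⁱ| = |S/Sⁱ| + 1` for
`i ≥ c + 1`. -/
theorem statement5
    {S : Type*} [SemigroupWithZero S] [Infinite S]
    (hfgS : FGSemigroup S) (hrnS : ResiduallyNilpotent S)
    {T : Type*} [SemigroupWithZero T] [Infinite T]
    (t : T) (ht : t ≠ 0) (htl : ∀ x : T, t * x = 0) (htr : ∀ x : T, x * t = 0)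
    (ν : T → S) (hmul : ∀ x y : T, ν (x * y) = ν x * ν y)
    (hsurj : Function.Surjective ν)
    (hker : ∀ x : T, ν x = 0 ↔ x = 0 ∨ x = t)
    (hinj : ∀ x y : T, x ≠ 0 → x ≠ t → ν x = ν y → x = y)
    (c : ℕ) (hc : t ∈ sgPow T c) (hc' : t ∉ sgPow T (c + 1)) :
    (∀ i, 1 ≤ i → i ≤ c → Nonempty (ReesQuot T i ≃* ReesQuot S i)) ∧
    (∀ i, c + 1 ≤ i → Nat.card (ReesQuot T i) = Nat.card (ReesQuot S i) + 1) := by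
  classical
  -- ν maps Tⁱ into Sⁱ
  have ha : ∀ i, ∀ x ∈ sgPow T i, ν x ∈ sgPow S i := by
    intro i
    induction i with
    | zero => intro x _; trivial
    | succ n ih =>
      cases n with
      | zero => intro x _; trivial
      | succ m =>
        rintro _ ⟨a, haa, b, -, rfl⟩
        rw [hmul]
        exact ⟨ν a, ih a haa, ν b, trivial, rfl⟩
  -- every element of Sⁱ lifts to Tⁱ
  have hb : ∀ i, ∀ s ∈ sgPow S i, ∃ x ∈ sgPow T i, ν x = s := by
    intro i
    induction i with
    | zero => intro s _; obtain ⟨x, hx⟩ := hsurj s; exact ⟨x, trivial, hx⟩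
    | succ n ih =>
      cases n with
      | zero => intro s _; obtain ⟨x, hx⟩ := hsurj s; exact ⟨x, trivial, hx⟩
      | succ m =>
        rintro _ ⟨a, haa, b, -, rfl⟩
        obtain ⟨x, hx, hxa⟩ := ih a haa
        obtain ⟨y, hy⟩ := hsurj b
        exact ⟨x * y, ⟨x, hx, y, trivial, rfl⟩, by rw [hmul, hxa, hy]⟩
  have hνt : ν t = 0 := (hker t).mpr (Or.inr rfl)
  have hν0 : ν 0 = 0 := (hker 0).mpr (Or.inl rfl)
  -- membership characterization for i ≤ c
  have hmem_le : ∀ i, i ≤ c → ∀ x : T, x ∈ sgPow T i ↔ ν x ∈ sgPow S i := by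
    intro i hic x
    refine ⟨fun hx => ha i x hx, fun hx => ?_⟩
    obtain ⟨y, hy, hyx⟩ := hb i (ν x) hx
    by_cases hx0 : x = 0
    · exact hx0 ▸ zero_mem_sgPow i
    by_cases hxt : x = t
    · exact hxt ▸ sgPow_antitone' T hic hc
    · exact (hinj x y hx0 hxt hyx.symm) ▸ hy
  -- membership characterization for i ≥ c + 1
  have hmem_gt : ∀ i, c + 1 ≤ i → ∀ x : T,
      x ∈ sgPow T i ↔ ν x ∈ sgPow S i ∧ x ≠ t := by
    intro i hic x
    constructor
    · intro hx
      refine ⟨ha i x hx, fun hxt => hc' (sgPow_antitone' T hic (hxt ▸ hx))⟩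
    · rintro ⟨hx, hxt⟩
      obtain ⟨y, hy, hyx⟩ := hb i (ν x) hx
      by_cases hx0 : x = 0
      · exact hx0 ▸ zero_mem_sgPow i
      · exact (hinj x y hx0 hxt hyx.symm) ▸ hy
  constructor
  · -- part 1 : isomorphism for 1 ≤ i ≤ c
    intro i _ hic
    have hresp : ∀ a b : T, (reesSetoid T (sgPow T i)).r a b →
        (reesSetoid S (sgPow S i)).r (ν a) (ν b) := by
      rintro a b (rfl | ⟨haa, hbb⟩)
      · exact Or.inl rfl
      · exact Or.inr ⟨ha i a haa, ha i b hbb⟩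
    let f : ReesQuot T i →ₙ* ReesQuot S i :=
      { toFun := Quotient.map ν hresp
        map_mul' := by
          intro a b
          induction a using Quotient.inductionOn with
          | h x =>
            induction b using Quotient.inductionOn with
            | h y => exact congrArg (Quotient.mk _) (hmul x y) }
    have hfbij : Function.Bijective f := by
      constructor
      · intro a b
        induction a using Quotient.inductionOn with
        | h x =>
          induction b using Quotient.inductionOn with
          | h y =>
            intro hxy
            rcases Quotient.exact hxy with h | h
            · by_cases hx0 : x = 0
              · subst hx0
                rcases (hker y).mp (by rw [← h, hν0]) with rfl | rfl
                · rfl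
                · exact Quotient.sound (Or.inr ⟨zero_mem_sgPow i,
                    sgPow_antitone' T hic hc⟩)
              by_cases hxt : x = t
              · subst hxt
                rcases (hker y).mp (by rw [← h, hνt]) with rfl | rfl
                · exact Quotient.sound (Or.inr ⟨sgPow_antitone' T hic hc,
                    zero_mem_sgPow i⟩)
                · rfl
              · exact congrArg (Quotient.mk _) (hinj x y hx0 hxt h)
            · exact Quotient.sound (Or.inr ⟨(hmem_le i hic x).mpr h.1,
                (hmem_le i hic y).mpr h.2⟩)
      · intro q
        induction q using Quotient.inductionOn with
        | h s =>
          obtain ⟨x, hx⟩ := hsurj s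
          exact ⟨Quotient.mk _ x, congrArg (Quotient.mk _) hx⟩
    exact ⟨MulEquiv.ofBijective f hfbij⟩
  · -- part 2 : cardinality for i ≥ c + 1
    intro i hic
    have hfinS : Finite ((sgPow S i)ᶜ : Set S) :=
      (compl_sgPow_finite hfgS i).to_subtype
    have htni : t ∉ sgPow T i := fun h => hc' (sgPow_antitone' T hic h)
    -- the bijection between the complements
    have h0T : ∀ x : T, x ∉ sgPow T i → x ≠ 0 :=
      fun x hx h0 => hx (h0 ▸ zero_mem_sgPow i)
    let g : ((sgPow T i)ᶜ : Set T) → Option ((sgPow S i)ᶜ : Set S) :=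
      fun x => if hxt : x.val = t then none else
        some ⟨ν x.val, fun h => x.2 ((hmem_gt i hic x.val).mpr ⟨h, hxt⟩)⟩
    have hgbij : Function.Bijective g := by
      constructor
      · rintro ⟨x, hx⟩ ⟨y, hy⟩ hxy
        simp only [g] at hxy
        split_ifs at hxy with h1 h2 h2
        · exact Subtype.ext (h1.trans h2.symm)
        · exact Subtype.ext (hinj x y (h0T x hx) h1
            ((congrArg Subtype.val (Option.some_injective _ hxy)) : ν x = ν y))
      · rintro (_ | ⟨s, hs⟩)
        · exact ⟨⟨t, htni⟩, dif_pos rfl⟩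
        · obtain ⟨x, hx⟩ := hsurj s
          have hs0 : s ≠ 0 := fun h => hs (h ▸ zero_mem_sgPow i)
          have hxt : x ≠ t := fun h => hs0 (hx ▸ h ▸ hνt)
          have hxi : x ∉ sgPow T i := fun h => hs (hx ▸ ha i x h)
          refine ⟨⟨x, hxi⟩, ?_⟩
          simp only [g, dif_neg hxt]
          exact congrArg some (Subtype.ext hx)
    haveI := Fintype.ofFinite ((sgPow S i)ᶜ : Set S)
    have hfinT : Finite ((sgPow T i)ᶜ : Set T) :=
      Finite.of_injective g hgbij.injective
    have hcards : Nat.card ((sgPow T i)ᶜ : Set T) =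
        Nat.card ((sgPow S i)ᶜ : Set S) + 1 := by
      rw [Nat.card_eq_of_bijective g hgbij, Finite.card_option]
    rw [card_reesQuot i hfinT, card_reesQuot i hfinS, hcards]
end

section
/- Let n ≥ 6 be even and K a field in which -1 is not a square. With X and J_{n-1} as above, the contracted semigroup algebras KX and K J_{n-1} are NOT isomorphic as K-algebras. -/
section AlgebraDefs

variable (K : Type*) [Field K] (A : Type*) [NonUnitalRing A] [Module K A]
  [SMulCommClass K A A] [IsScalarTower K A A]

/-- `algPow K A i` is the submodule `Aⁱ` spanned by all products of `i` elements
(with `A⁰ = A¹ = A`). -/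
def algPow : ℕ → Submodule K A
  | 0 => ⊤
  | 1 => ⊤
  | n + 2 => Submodule.span K (Set.image2 (· * ·) ((algPow (n + 1) : Submodule K A) : Set A) Set.univ)

/-- The dimension of the layer `Aⁱ/Aⁱ⁺¹`. -/
noncomputable def algLayerDim (i : ℕ) : ℕ :=
  Module.finrank K
    (↥(algPow K A i) ⧸ (algPow K A (i + 1)).comap (algPow K A i).subtype)

/-- The coclass of the nilpotent quotient `A/Aⁱ`, namely `dim (A/Aⁱ) - (i - 1)`. -/
noncomputable def algCcQuot (i : ℕ) : ℕ :=
  Module.finrank K (A ⧸ algPow K A i) - (i - 1)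

/-- A finitely generated residually nilpotent algebra has coclass `r` if the coclasses
of its nilpotent quotients `A/Aⁱ` converge to `r`. -/
def HasCoclassAlg (r : ℕ) : Prop :=
  ∀ᶠ i in Filter.atTop, algCcQuot K A i = r

/-- The two-sided annihilator of an algebra, as a submodule. -/
def twoSidedAnn : Submodule K A where
  carrier := {a | (∀ b, a * b = 0) ∧ ∀ b, b * a = 0}
  add_mem' := by
    intro a b ha hb
    exact ⟨fun c => by rw [add_mul, ha.1 c, hb.1 c, add_zero],
           fun c => by rw [mul_add, ha.2 c, hb.2 c, add_zero]⟩
  zero_mem' := ⟨fun b => zero_mul b, fun b => mul_zero b⟩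
  smul_mem' := by
    intro k a ha
    exact ⟨fun b => by rw [smul_mul_assoc, ha.1 b, smul_zero],
           fun b => by rw [mul_smul_comm, ha.2 b, smul_zero]⟩

/-- The right annihilator of an algebra, as a submodule. -/
def rightAnn : Submodule K A where
  carrier := {a | ∀ b, b * a = 0}
  add_mem' := by
    intro a b ha hb c
    rw [mul_add, ha c, hb c, add_zero]
  zero_mem' := fun b => mul_zero b
  smul_mem' := by
    intro k a ha b
    rw [mul_smul_comm, ha b, smul_zero]

end AlgebraDefs

/-- `IsContractedAlgebra K f` asserts that `f : S → A` exhibits the algebra `A` as the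
contracted semigroup algebra of the semigroup-with-zero `S` over the field `K`:
`f` is multiplicative, sends zero to zero, and the images of the non-zero elements
of `S` form a `K`-basis of `A`. -/
def IsContractedAlgebra (K : Type*) [Field K] {S A : Type*} [SemigroupWithZero S]
    [NonUnitalRing A] [Module K A] (f : S → A) : Prop :=
  f 0 = 0 ∧ (∀ s t : S, f (s * t) = f s * f t) ∧
  LinearIndependent K (fun s : {s : S // s ≠ 0} => f s.1) ∧
  Submodule.span K (Set.range fun s : {s : S // s ≠ 0} => f s.1) = ⊤
/-- `IsCC1Sg n a b c S u v` asserts that `S` is the nilpotent semigroup of order `n`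
with zero given by the presentation
`⟨u, v ∣ u^(n-1) = u^n, u*v = u^a, v*u = u^b, v*v = u^c⟩`:
its distinct elements are `u, u², …, u^(n-2), v` and the zero `u^(n-1)`. -/
def IsCC1Sg (n a b c : ℕ) (S : Type*) [SemigroupWithZero S] (u v : S) : Prop :=
  mpow u (n - 1) = 0 ∧ u * v = mpow u a ∧ v * u = mpow u b ∧ v * v = mpow u c ∧
  v ≠ 0 ∧ (∀ i, 1 ≤ i → i ≤ n - 2 → mpow u i ≠ 0) ∧
  (∀ i j, 1 ≤ i → i ≤ n - 2 → 1 ≤ j → j ≤ n - 2 → mpow u i = mpow u j → i = j) ∧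
  (∀ i, 1 ≤ i → i ≤ n - 2 → v ≠ mpow u i) ∧
  (∀ s : S, s = 0 ∨ s = v ∨ ∃ i, 1 ≤ i ∧ i ≤ n - 2 ∧ s = mpow u i)

section MyAux
lemma mpow_one {S : Type*} [Mul S] (x : S) : mpow x 1 = x := rfl

lemma mpow_succ {S : Type*} [Mul S] (x : S) {k : ℕ} (hk : 1 ≤ k) :
    mpow x (k + 1) = mpow x k * x := by
  match k, hk with
  | (k+1), _ => rfl

lemma mpow_add {S : Type*} [Semigroup S] (x : S) {i j : ℕ} (hi : 1 ≤ i) (hj : 1 ≤ j) :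
    mpow x (i + j) = mpow x i * mpow x j := by
  induction j with
  | zero => omega
  | succ j ih =>
    rcases Nat.eq_or_lt_of_le hj with h | h
    · obtain rfl : j = 0 := by omega
      exact mpow_succ x hi
    · have hj1 : 1 ≤ j := by omega
      rw [show i + (j+1) = (i + j) + 1 from rfl, mpow_succ x (by omega), ih hj1,
        mpow_succ x hj1, mul_assoc]

lemma mpow_zero_of_le {S : Type*} [SemigroupWithZero S] {u : S} {m : ℕ} (hm : 1 ≤ m)
    (h : mpow u m = 0) {k : ℕ} (hk : m ≤ k) : mpow u k = 0 := by
  rcases Nat.eq_or_lt_of_le hk with rfl | hlt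
  · exact h
  · have : k = m + (k - m) := by omega
    rw [this, mpow_add u hm (by omega), h, zero_mul]

lemma sum_smul_eq_zero_of_indep {K M ι : Type*} [Field K] [AddCommGroup M] [Module K M]
    {w : ι → M} (li : LinearIndependent K w) (s : Finset ℕ) (φ : ℕ → ι)
    (hφ : ∀ t ∈ s, ∀ t' ∈ s, φ t = φ t' → t = t') (δ : ℕ → K)
    (h : ∑ t ∈ s, δ t • w (φ t) = 0) : ∀ t ∈ s, δ t = 0 := by
  have li' : LinearIndependent K (fun t : {x // x ∈ s} => w (φ t.1)) :=
    li.comp (fun t : {x // x ∈ s} => φ t.1)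
      (fun a b hab => Subtype.ext (hφ _ a.2 _ b.2 hab))
  have h' : ∑ t ∈ s.attach, (δ t.1) • w (φ t.1) = 0 := by
    rw [Finset.sum_attach s (fun t => δ t • w (φ t))]; exact h
  intro t ht
  exact linearIndependent_iff'.mp li' s.attach (fun x => δ x.1) h' ⟨t, ht⟩ (Finset.mem_attach _ _)

lemma mul_mem_of_span {K A : Type*} [Field K] [NonUnitalRing A] [Module K A]
    [SMulCommClass K A A] [IsScalarTower K A A]
    (V : Submodule K A) (s : Set A) (hs : Submodule.span K s = ⊤)
    (h : ∀ x ∈ s, ∀ y ∈ s, x * y ∈ V) : ∀ a b : A, a * b ∈ V := by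
  have step1 : ∀ x ∈ s, ∀ b : A, x * b ∈ V := by
    intro x hx b
    have hb : b ∈ Submodule.span K s := hs ▸ Submodule.mem_top
    induction hb using Submodule.span_induction with
    | mem y hy => exact h x hx y hy
    | zero => rw [mul_zero]; exact V.zero_mem
    | add y z _ _ hy hz => rw [mul_add]; exact V.add_mem hy hz
    | smul k y _ hy => rw [mul_smul_comm]; exact V.smul_mem k hy
  intro a b
  have ha : a ∈ Submodule.span K s := hs ▸ Submodule.mem_top
  induction ha using Submodule.span_induction with
  | mem x hx => exact step1 x hx b
  | zero => rw [zero_mul]; exact V.zero_mem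
  | add y z _ _ hy hz => rw [add_mul]; exact V.add_mem hy hz
  | smul k y _ hy => rw [smul_mul_assoc]; exact V.smul_mem k hy

lemma sq_add_sq_eq_zero {K : Type*} [Field K] (hK : ∀ a : K, a * a ≠ -1) {a b : K}
    (h : a * a + b * b = 0) : a = 0 ∧ b = 0 := by
  have hb : b = 0 := by
    by_contra hb
    apply hK (a * b⁻¹)
    field_simp
    linear_combination h
  refine ⟨?_, hb⟩
  rw [hb] at h
  simpa [mul_self_eq_zero] using h

lemma rep_lemma {K B : Type*} [Field K] [AddCommGroup B] [Module K B] (N : ℕ) (U : ℕ → B) (Vb : B)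
    (y : B) (hy : y ∈ Submodule.span K (insert Vb {b | ∃ k, 1 ≤ k ∧ k ≤ N ∧ b = U k})) :
    ∃ α : ℕ → K, ∃ β : K, y = (∑ k ∈ Finset.Icc 1 N, α k • U k) + β • Vb := by
  induction hy using Submodule.span_induction with
  | mem b hb =>
    rcases hb with rfl | ⟨k, hk1, hkN, rfl⟩
    · exact ⟨0, 1, by simp⟩
    · refine ⟨fun t => if t = k then 1 else 0, 0, ?_⟩
      simp only [ite_smul, one_smul, zero_smul, zero_smul, add_zero]
      rw [Finset.sum_ite_eq' (Finset.Icc 1 N) k U, if_pos (Finset.mem_Icc.mpr ⟨hk1, hkN⟩)]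
  | zero => exact ⟨0, 0, by simp⟩
  | add a b _ _ ha hb =>
    obtain ⟨α, β, rfl⟩ := ha
    obtain ⟨α', β', rfl⟩ := hb
    refine ⟨α + α', β + β', ?_⟩
    simp only [Pi.add_apply, add_smul, Finset.sum_add_distrib]
    abel
  | smul c a _ ha =>
    obtain ⟨α, β, rfl⟩ := ha
    refine ⟨fun k => c * α k, c * β, ?_⟩
    simp only [smul_add, Finset.smul_sum, smul_smul]

lemma square_expand {K B : Type*} [Field K] [NonUnitalRing B] [Module K B]
    [SMulCommClass K B B] [IsScalarTower K B B] (N : ℕ) (hN : 2 ≤ N) (U : ℕ → B) (Vb : B)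
    (hUmul : ∀ k l, 1 ≤ k → 1 ≤ l → U k * U l = U (k + l))
    (hUV : ∀ k, 1 ≤ k → U k * Vb = 0) (hVU : ∀ k, 1 ≤ k → Vb * U k = 0)
    (hVV : Vb * Vb = U N)
    (α : ℕ → K) (β : K) :
    ((∑ k ∈ Finset.Icc 1 N, α k • U k) + β • Vb) * ((∑ k ∈ Finset.Icc 1 N, α k • U k) + β • Vb)
    = ∑ t ∈ Finset.Icc 2 (2*N),
        ((∑ p ∈ (Finset.Icc 1 N ×ˢ Finset.Icc 1 N).filter (fun p => p.1 + p.2 = t),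
            α p.1 * α p.2) + (if t = N then β * β else 0)) • U t := by
  set s1 := Finset.Icc 1 N with hs1
  have hx_z : (∑ k ∈ s1, α k • U k) * (β • Vb) = 0 := by
    rw [Finset.sum_mul]
    apply Finset.sum_eq_zero
    intro k hk
    rw [smul_mul_assoc, mul_smul_comm, hUV k (Finset.mem_Icc.mp hk).1, smul_zero, smul_zero]
  have hz_x : (β • Vb) * (∑ k ∈ s1, α k • U k) = 0 := by
    rw [Finset.mul_sum]
    apply Finset.sum_eq_zero
    intro k hk
    rw [smul_mul_assoc, mul_smul_comm, hVU k (Finset.mem_Icc.mp hk).1, smul_zero, smul_zero]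
  have hzz : (β • Vb) * (β • Vb) = (β * β) • U N := by
    rw [smul_mul_assoc, mul_smul_comm, hVV, smul_smul]
  have hxx : (∑ k ∈ s1, α k • U k) * (∑ l ∈ s1, α l • U l)
      = ∑ p ∈ s1 ×ˢ s1, (α p.1 * α p.2) • U (p.1 + p.2) := by
    rw [Finset.sum_mul_sum, ← Finset.sum_product']
    apply Finset.sum_congr rfl
    rintro ⟨k, l⟩ hp
    simp only [hs1, Finset.mem_product, Finset.mem_Icc] at hp
    rw [smul_mul_assoc, mul_smul_comm, smul_smul, hUmul k l hp.1.1 hp.2.1]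
  have hfib : ∑ p ∈ s1 ×ˢ s1, (α p.1 * α p.2) • U (p.1 + p.2)
      = ∑ t ∈ Finset.Icc 2 (2*N),
          (∑ p ∈ (s1 ×ˢ s1).filter (fun p => p.1 + p.2 = t), α p.1 * α p.2) • U t := by
    rw [← Finset.sum_fiberwise_of_maps_to (g := fun p : ℕ × ℕ => p.1 + p.2)
      (t := Finset.Icc 2 (2*N)) (fun p hp => by
        simp only [Finset.mem_product, Finset.mem_Icc, hs1] at hp ⊢
        omega) (fun p => (α p.1 * α p.2) • U (p.1 + p.2))]
    apply Finset.sum_congr rfl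
    intro t _
    rw [Finset.sum_smul]
    apply Finset.sum_congr rfl
    intro p hp
    rw [(Finset.mem_filter.mp hp).2]
  have hsplit : ∑ t ∈ Finset.Icc 2 (2*N),
        ((∑ p ∈ (s1 ×ˢ s1).filter (fun p => p.1 + p.2 = t), α p.1 * α p.2)
          + (if t = N then β * β else 0)) • U t
      = (∑ t ∈ Finset.Icc 2 (2*N),
          (∑ p ∈ (s1 ×ˢ s1).filter (fun p => p.1 + p.2 = t), α p.1 * α p.2) • U t)
        + (β * β) • U N := by
    simp only [add_smul, Finset.sum_add_distrib]
    congr 1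
    have : ∀ t ∈ Finset.Icc 2 (2*N), (if t = N then β * β else 0) • U t
        = (if t = N then (β*β) • U t else 0) := by
      intro t _
      split <;> simp
    rw [Finset.sum_congr rfl this, Finset.sum_ite_eq' (Finset.Icc 2 (2*N)) N
      (fun t => (β*β) • U t), if_pos (Finset.mem_Icc.mpr ⟨hN, by omega⟩)]
  rw [hsplit, add_mul, mul_add, mul_add, hx_z, hz_x, hzz, hxx, hfib]
  abel

end MyAux

/-- Let `n ≥ 6` be even and `K` a field in which `-1` is not a square. Then the contracted
semigroup algebras of `X` and `J_(n-1)` (as in the previous statement) are NOT isomorphic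
as `K`-algebras. -/
theorem statement11 {K : Type*} [Field K] (n : ℕ) (hn : 6 ≤ n) (hev : Even n)
    (hK : ∀ a : K, a * a ≠ -1)
    {SX : Type*} [SemigroupWithZero SX] (uX vX : SX)
    (hX : IsCC1Sg n (n / 2) (n / 2) (n - 1) SX uX vX)
    {SJ : Type*} [SemigroupWithZero SJ] (uJ vJ : SJ)
    (hJ : IsCC1Sg n (n - 1) (n - 1) (n - 2) SJ uJ vJ)
    {A : Type*} [NonUnitalRing A] [Module K A] [SMulCommClass K A A] [IsScalarTower K A A]
    {B : Type*} [NonUnitalRing B] [Module K B] [SMulCommClass K B B] [IsScalarTower K B B]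
    (f : SX → A) (hf : IsContractedAlgebra K f)
    (g : SJ → B) (hg : IsContractedAlgebra K g) :
    ¬ ∃ e : A →ₙₐ[K] B, Function.Bijective e := by
  rintro ⟨e, he⟩
  obtain ⟨hf0, hfm, hfli, hfsp⟩ := hf
  obtain ⟨hg0, hgm, hgli, hgsp⟩ := hg
  obtain ⟨hXz, hXuv, hXvu, hXvv, hXvne, hXune, hXuinj, hXvneu, hXclass⟩ := hX
  obtain ⟨hJz, hJuv, hJvu, hJvv, hJvne, hJune, hJuinj, hJvneu, hJclass⟩ := hJ
  obtain ⟨m, hm⟩ := hev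
  have hm3 : 3 ≤ m := by omega
  have hn2 : n / 2 = m := by omega
  -- A-side setup
  set S0 : Set {s : SX // s ≠ 0} := {s | ∃ k, 2 ≤ k ∧ k ≤ n - 2 ∧ s.1 = mpow uX k} with hS0
  set V : Submodule K A :=
    Submodule.span K ((fun s : {s : SX // s ≠ 0} => f s.1) '' S0) with hV
  have hfvV : f vX ∉ V := by
    have hnot : (⟨vX, hXvne⟩ : {s : SX // s ≠ 0}) ∉ S0 := by
      rintro ⟨k, hk2, hkn, hk⟩
      exact hXvneu k (by omega) hkn hk
    exact hfli.notMem_span_image hnot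
  have hfmem : ∀ k, 2 ≤ k → f (mpow uX k) ∈ V := by
    intro k hk2
    by_cases hk : k ≤ n - 2
    · exact Submodule.subset_span
        ⟨⟨mpow uX k, hXune k (by omega) hk⟩, ⟨k, hk2, hk, rfl⟩, rfl⟩
    · rw [mpow_zero_of_le (by omega) hXz (by omega), hf0]
      exact V.zero_mem
  have hXuv' : ∀ i, 1 ≤ i → mpow uX i * vX = mpow uX (i - 1 + n / 2) := by
    intro i hi
    match i, hi with
    | 1, _ =>
      rw [mpow_one]
      rw [hXuv]
      congr 1
      omega
    | (j+2), _ =>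
      have h1 : mpow uX (j+2) = mpow uX (j+1) * uX := rfl
      rw [h1, mul_assoc, hXuv, ← mpow_add uX (by omega) (by omega)]
      congr 1 <;> omega
  have hXvu' : ∀ i, 1 ≤ i → vX * mpow uX i = mpow uX (n / 2 + i - 1) := by
    intro i hi
    match i, hi with
    | 1, _ =>
      rw [mpow_one]
      rw [hXvu]
      congr 1 <;> omega
    | (j+2), _ =>
      have h1 : mpow uX (j+2) = uX * mpow uX (j+1) := by
        rw [show j+2 = 1+(j+1) by omega, mpow_add uX le_rfl (by omega), mpow_one]
      rw [h1, ← mul_assoc, hXvu, ← mpow_add uX (by omega) (by omega)]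
      congr 1 <;> omega
  have hfprod : ∀ x ∈ Set.range (fun s : {s : SX // s ≠ 0} => f s.1),
      ∀ y ∈ Set.range (fun s : {s : SX // s ≠ 0} => f s.1), x * y ∈ V := by
    rintro _ ⟨s, rfl⟩ _ ⟨t, rfl⟩
    show f s.1 * f t.1 ∈ V
    rw [← hfm]
    rcases hXclass s.1 with hs | hs | ⟨i, hi1, hin, hs⟩
    · exact absurd hs s.2
    · rcases hXclass t.1 with ht | ht | ⟨j, hj1, hjn, ht⟩
      · exact absurd ht t.2
      · rw [hs, ht, hXvv]
        exact hfmem (n-1) (by omega)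
      · rw [hs, ht, hXvu' j hj1]
        exact hfmem _ (by omega)
    · rcases hXclass t.1 with ht | ht | ⟨j, hj1, hjn, ht⟩
      · exact absurd ht t.2
      · rw [hs, ht, hXuv' i hi1]
        exact hfmem _ (by omega)
      · rw [hs, ht, ← mpow_add uX hi1 hj1]
        exact hfmem _ (by omega)
  have hprodV : ∀ a b : A, a * b ∈ V :=
    mul_mem_of_span V _ hfsp hfprod
  -- B-side setup
  set U : ℕ → B := fun k => g (mpow uJ k) with hU
  have hU0 : ∀ k, n - 1 ≤ k → U k = 0 := by
    intro k hk
    simp only [hU]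
    rw [mpow_zero_of_le (by omega) hJz hk, hg0]
  have hUmul : ∀ k l, 1 ≤ k → 1 ≤ l → U k * U l = U (k + l) := by
    intro k l hk hl
    simp only [hU]
    rw [← hgm, ← mpow_add uJ hk hl]
  have hJuv0 : uJ * vJ = 0 := hJuv.trans hJz
  have hJvu0 : vJ * uJ = 0 := hJvu.trans hJz
  have hUVs : ∀ k, 1 ≤ k → mpow uJ k * vJ = 0 := by
    intro k hk
    match k, hk with
    | 1, _ => rw [mpow_one]; exact hJuv0
    | (j+2), _ =>
      have h1 : mpow uJ (j+2) = mpow uJ (j+1) * uJ := rfl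
      rw [h1, mul_assoc, hJuv0, mul_zero]
  have hVUs : ∀ k, 1 ≤ k → vJ * mpow uJ k = 0 := by
    intro k hk
    match k, hk with
    | 1, _ => rw [mpow_one]; exact hJvu0
    | (j+2), _ =>
      have h1 : mpow uJ (j+2) = uJ * mpow uJ (j+1) := by
        rw [show j+2 = 1+(j+1) by omega, mpow_add uJ le_rfl (by omega), mpow_one]
      rw [h1, ← mul_assoc, hJvu0, zero_mul]
  have hUV : ∀ k, 1 ≤ k → U k * (g vJ) = 0 := by
    intro k hk
    simp only [hU]
    rw [← hgm, hUVs k hk, hg0]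
  have hVU : ∀ k, 1 ≤ k → (g vJ) * U k = 0 := by
    intro k hk
    simp only [hU]
    rw [← hgm, hVUs k hk, hg0]
  have hVV : (g vJ) * (g vJ) = U (n - 2) := by
    simp only [hU]
    rw [← hgm, hJvv]
  -- representation of e (f vX)
  have hspan : ∀ y : B,
      y ∈ Submodule.span K (insert (g vJ) {b : B | ∃ k, 1 ≤ k ∧ k ≤ n - 2 ∧ b = U k}) := by
    intro y
    have h1 : Submodule.span K (Set.range (fun s : {s : SJ // s ≠ 0} => g s.1))
        ≤ Submodule.span K (insert (g vJ) {b : B | ∃ k, 1 ≤ k ∧ k ≤ n - 2 ∧ b = U k}) := by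
      apply Submodule.span_mono
      rintro _ ⟨s, rfl⟩
      rcases hJclass s.1 with hs | hs | ⟨i, hi1, hin, hs⟩
      · exact absurd hs s.2
      · show g s.1 ∈ _
        rw [hs]
        exact Set.mem_insert _ _
      · exact Set.mem_insert_of_mem _ ⟨i, hi1, hin, by simp only [hU]; rw [hs]⟩
    exact h1 (hgsp ▸ Submodule.mem_top)
  obtain ⟨α, β, hy⟩ := rep_lemma (n-2) U (g vJ) (e (f vX)) (hspan _)
  have hvv0 : f vX * f vX = 0 := by rw [← hfm, hXvv, hXz, hf0]
  have hy2 : e (f vX) * e (f vX) = 0 := by rw [← map_mul, hvv0, map_zero]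
  have hexp := square_expand (K := K) (n-2) (by omega) U (g vJ) hUmul hUV hVU hVV α β
  rw [← hy, hy2] at hexp
  -- extract coefficients
  set φ : ℕ → {s : SJ // s ≠ 0} := fun t =>
    if h : 1 ≤ t ∧ t ≤ n - 2 then ⟨mpow uJ t, hJune t h.1 h.2⟩ else ⟨vJ, hJvne⟩ with hφ
  have hφval : ∀ t, 1 ≤ t → t ≤ n - 2 → (φ t).1 = mpow uJ t := by
    intro t h1 h2
    simp only [hφ]
    rw [dif_pos ⟨h1, h2⟩]
  have hφinj : ∀ t ∈ Finset.Icc 2 (n-2), ∀ t' ∈ Finset.Icc 2 (n-2), φ t = φ t' → t = t' := by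
    intro t ht t' ht' hEq
    rw [Finset.mem_Icc] at ht ht'
    have h1 := hφval t (by omega) ht.2
    have h2 := hφval t' (by omega) ht'.2
    have h3 : mpow uJ t = mpow uJ t' := by rw [← h1, ← h2, hEq]
    exact hJuinj t t' (by omega) ht.2 (by omega) ht'.2 h3
  have hsum0 : ∑ t ∈ Finset.Icc 2 (n-2),
      ((∑ p ∈ (Finset.Icc 1 (n-2) ×ˢ Finset.Icc 1 (n-2)).filter (fun p => p.1 + p.2 = t),
        α p.1 * α p.2) + (if t = n-2 then β * β else 0)) •
        (fun s : {s : SJ // s ≠ 0} => g s.1) (φ t) = 0 := by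
    have hcg : ∀ t ∈ Finset.Icc 2 (n-2),
        ((∑ p ∈ (Finset.Icc 1 (n-2) ×ˢ Finset.Icc 1 (n-2)).filter (fun p => p.1 + p.2 = t),
          α p.1 * α p.2) + (if t = n-2 then β * β else 0)) •
          (fun s : {s : SJ // s ≠ 0} => g s.1) (φ t)
        = ((∑ p ∈ (Finset.Icc 1 (n-2) ×ˢ Finset.Icc 1 (n-2)).filter (fun p => p.1 + p.2 = t),
          α p.1 * α p.2) + (if t = n-2 then β * β else 0)) • U t := by
      intro t ht
      rw [Finset.mem_Icc] at ht
      show _ • g (φ t).1 = _ • U t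
      rw [hφval t (by omega) ht.2]
      try simp only [hU]
    rw [Finset.sum_congr rfl hcg]
    rw [Finset.sum_subset (Finset.Icc_subset_Icc le_rfl (by omega : n-2 ≤ 2*(n-2)))]
    · exact hexp.symm
    · intro t ht hts
      rw [Finset.mem_Icc] at ht hts
      rw [hU0 t (by omega), smul_zero]
  have hδ := sum_smul_eq_zero_of_indep hgli (Finset.Icc 2 (n-2)) φ hφinj _ hsum0
  -- field computation
  have key : ∀ k t, 1 ≤ k → t = 2*k → k ≤ n-2 →
      (∀ i, 1 ≤ i → i < k → α i = 0) →
      (∑ p ∈ (Finset.Icc 1 (n-2) ×ˢ Finset.Icc 1 (n-2)).filter (fun p => p.1 + p.2 = t),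
        α p.1 * α p.2) = α k * α k := by
    intro k t hk1 ht hkn hprev
    apply Finset.sum_eq_single_of_mem (k, k)
    · simp only [Finset.mem_filter, Finset.mem_product, Finset.mem_Icc]
      omega
    · rintro ⟨p1, p2⟩ hp hpne
      simp only [Finset.mem_filter, Finset.mem_product, Finset.mem_Icc] at hp
      rcases lt_trichotomy p1 k with h | h | h
      · rw [hprev p1 (by omega) h, zero_mul]
      · exact absurd (by simp only [Prod.mk.injEq]; omega) hpne
      · rw [hprev p2 (by omega) (by omega), mul_zero]
  have hC : ∀ k, 1 ≤ k → k < m - 1 → α k = 0 := by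
    intro k
    induction k using Nat.strong_induction_on with
    | _ k ih =>
      intro hk1 hkm
      have ht2 : (2*k) ∈ Finset.Icc 2 (n-2) := Finset.mem_Icc.mpr ⟨by omega, by omega⟩
      have h0 := hδ (2*k) ht2
      rw [if_neg (by omega : ¬ (2*k) = n-2), add_zero,
        key k (2*k) hk1 rfl (by omega) (fun i hi1 hik => ih i hik hi1 (by omega))] at h0
      exact mul_self_eq_zero.mp h0
  have h0 := hδ (n-2) (Finset.mem_Icc.mpr ⟨by omega, le_rfl⟩)
  rw [if_pos rfl,
    key (m-1) (n-2) (by omega) (by omega) (by omega) (fun i hi1 hik => hC i hi1 hik)] at h0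
  obtain ⟨-, hβ0⟩ := sq_add_sq_eq_zero hK h0
  have hα1 : α 1 = 0 := hC 1 le_rfl (by omega)
  -- conclude
  set W : Submodule K B := Submodule.span K {b : B | ∃ k, 2 ≤ k ∧ k ≤ n-2 ∧ b = U k} with hW
  have hyW : e (f vX) ∈ W := by
    rw [hy, hβ0, zero_smul, add_zero]
    apply Submodule.sum_mem
    intro k hk
    rw [Finset.mem_Icc] at hk
    rcases eq_or_lt_of_le hk.1 with h1 | h1
    · rw [← h1, hα1, zero_smul]
      exact W.zero_mem
    · exact W.smul_mem _ (Submodule.subset_span ⟨k, by omega, hk.2, rfl⟩)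
  have hWmap : W ≤ Submodule.map (e : A →ₗ[K] B) V := by
    rw [hW]
    apply Submodule.span_le.mpr
    rintro _ ⟨k, hk2, hkn, rfl⟩
    obtain ⟨a, ha⟩ := he.2 (U (k-1))
    obtain ⟨b, hb⟩ := he.2 (U 1)
    refine Submodule.mem_map.mpr ⟨a * b, hprodV a b, ?_⟩
    have hcoe : (e : A →ₗ[K] B) (a * b) = e (a * b) := rfl
    rw [hcoe, map_mul, ha, hb, hUmul (k-1) 1 (by omega) le_rfl]
    congr 1
    omega
  obtain ⟨x, hxV, hxe⟩ := Submodule.mem_map.mp (hWmap hyW)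
  have hxfv : x = f vX := he.1 (by rw [show e x = (e : A →ₗ[K] B) x from rfl, hxe])
  exact hfvV (hxfv ▸ hxV)
end
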